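/- Fix γ > 0 and set S = ⌊γQ⌋. Then as Q → ∞, ∑_{i=0}^{S} C(S,i)(1/Q)^i (1−1/Q)^{S−i} log₂(i!) → ∑_{i=0}^{∞} (γ^i/i!) e^{−γ} log₂(i!). That is, the expectation of log₂(B!) for B ~ Bin(S, 1/Q) converges to the expectation of log₂(P!) for P ~ Poisson(γ). -/

import Mathlib

open Finset Filter

private lemma logb_factorial_nonneg (i : ℕ) : 0 ≤ Real.logb 2 (Nat.factorial i) :=
  Real.logb_nonneg (by norm_num) (by exact_mod_cast Nat.one_le_iff_ne_zero.2 i.factorial_pos.ne')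

private lemma logb_factorial_le (i : ℕ) :
    Real.logb 2 (Nat.factorial i) ≤ 4 ^ i / Real.log 2 := by
  rw [Real.logb, div_le_div_iff_of_pos_right (by positivity : (0:ℝ) < Real.log 2)]
  have h1 : Real.log (Nat.factorial i) ≤ Real.log ((i : ℝ) ^ i) := by
    apply Real.log_le_log (by positivity)
    exact_mod_cast Nat.factorial_le_pow i
  have h2 : Real.log ((i : ℝ) ^ i) = i * Real.log i := Real.log_pow i i
  have h3 : Real.log i ≤ (i : ℝ) := by
    rcases Nat.eq_zero_or_pos i with h | h
    · simp [h]
    · have := Real.log_le_sub_one_of_pos (by exact_mod_cast h : (0:ℝ) < i)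
      linarith
  have h4 : (i : ℝ) * i ≤ 4 ^ i := by
    have h5 : (i : ℝ) ≤ 2 ^ i := by exact_mod_cast (Nat.lt_two_pow_self (n := i)).le
    calc (i : ℝ) * i ≤ 2 ^ i * 2 ^ i :=
          mul_le_mul h5 h5 (Nat.cast_nonneg i) (by positivity)
      _ = 4 ^ i := by rw [← mul_pow]; norm_num
  calc Real.log (Nat.factorial i) ≤ (i : ℝ) * Real.log i := by rw [← h2]; exact h1
    _ ≤ (i : ℝ) * i := mul_le_mul_of_nonneg_left h3 (Nat.cast_nonneg i)
    _ ≤ 4 ^ i := h4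

/-- Poisson approximation: for `S = ⌊γQ⌋` and `B ~ Bin(S, 1/Q)`,
`E[log₂(B!)] → E[log₂(P!)]` for `P ~ Poisson(γ)` as `Q → ∞`. -/
theorem binomial_to_poisson_log_factorial (γ : ℝ) (hγ : 0 < γ) :
    Tendsto (fun Q : ℕ =>
        ∑ i ∈ Finset.range (⌊γ * Q⌋₊ + 1),
          ((⌊γ * Q⌋₊).choose i : ℝ) * (1 / Q) ^ i * (1 - 1 / Q) ^ (⌊γ * Q⌋₊ - i) *
            Real.logb 2 (Nat.factorial i))
      atTop
      (nhds (∑' i : ℕ,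
        γ ^ i / (Nat.factorial i) * Real.exp (-γ) * Real.logb 2 (Nat.factorial i))) := by
  set f : ℕ → ℕ → ℝ := fun Q i =>
    ((⌊γ * Q⌋₊).choose i : ℝ) * (1 / Q) ^ i * (1 - 1 / Q) ^ (⌊γ * Q⌋₊ - i) *
      Real.logb 2 (Nat.factorial i) with hf
  -- the finite sum is a tsum
  have hsum_eq : ∀ Q : ℕ,
      (∑ i ∈ Finset.range (⌊γ * Q⌋₊ + 1), f Q i) = ∑' i, f Q i := by
    intro Q
    refine (tsum_eq_sum ?_).symm
    intro i hi
    have hgt : ⌊γ * (Q:ℝ)⌋₊ + 1 ≤ i := le_of_not_gt (fun h => hi (Finset.mem_range.2 h))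
    simp only [hf]
    rw [Nat.choose_eq_zero_of_lt (by omega)]
    simp
  -- basic limits
  have hSdiv : Tendsto (fun Q : ℕ => (⌊γ * (Q : ℝ)⌋₊ : ℝ) / Q) atTop (nhds γ) :=
    (tendsto_nat_floor_mul_div_atTop hγ.le).comp tendsto_natCast_atTop_atTop
  have hSinf : Tendsto (fun Q : ℕ => ⌊γ * (Q : ℝ)⌋₊) atTop atTop :=
    tendsto_nat_floor_mul_atTop γ hγ
  have hinv : Tendsto (fun Q : ℕ => 1 / (Q : ℝ)) atTop (nhds 0) :=
    tendsto_one_div_atTop_nhds_zero_nat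
  have hlog0 : Tendsto (fun Q : ℕ => Real.log (1 - 1 / (Q : ℝ))) atTop (nhds 0) := by
    have h : Tendsto (fun Q : ℕ => 1 - 1 / (Q : ℝ)) atTop (nhds 1) := by
      simpa using tendsto_const_nhds.sub hinv
    simpa [Function.comp_def] using ((Real.continuousAt_log one_ne_zero).tendsto.comp h)
  have hQlog : Tendsto (fun Q : ℕ => (Q : ℝ) * Real.log (1 - 1 / Q)) atTop (nhds (-1)) := by
    have h := (Real.tendsto_mul_log_one_add_div_atTop (-1)).comp
      (tendsto_natCast_atTop_atTop (R := ℝ))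
    refine h.congr fun Q => ?_
    simp [Function.comp_def, neg_div, ← sub_eq_add_neg]
  have hSlog : Tendsto (fun Q : ℕ => (⌊γ * (Q : ℝ)⌋₊ : ℝ) * Real.log (1 - 1 / Q))
      atTop (nhds (-γ)) := by
    have h := hSdiv.mul hQlog
    rw [show γ * (-1) = -γ by ring] at h
    refine h.congr' ?_
    filter_upwards [eventually_ge_atTop 1] with Q hQ
    have hQ0 : (Q : ℝ) ≠ 0 := by positivity
    field_simp
  -- pointwise limit of each term
  have hpt : ∀ k : ℕ, Tendsto (fun Q : ℕ => f Q k) atTop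
      (nhds (γ ^ k / (Nat.factorial k) * Real.exp (-γ) * Real.logb 2 (Nat.factorial k))) := by
    intro k
    have hA : Tendsto (fun Q : ℕ => ((⌊γ * Q⌋₊).choose k : ℝ) * (1 / Q) ^ k) atTop
        (nhds (γ ^ k / (Nat.factorial k))) := by
      have hfac : ∀ j ∈ Finset.range k, Tendsto
          (fun Q : ℕ => ((⌊γ * (Q:ℝ)⌋₊ - j : ℕ) : ℝ) / Q) atTop (nhds γ) := by
        intro j hj
        have hjk := Finset.mem_range.1 hj
        have h := hSdiv.sub (hinv.const_mul (j : ℝ))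
        rw [mul_zero, sub_zero] at h
        refine h.congr' ?_
        filter_upwards [hSinf.eventually_ge_atTop k] with Q hS
        have hjS : j ≤ ⌊γ * (Q:ℝ)⌋₊ := le_trans hjk.le hS
        rw [Nat.cast_sub hjS, sub_div, mul_one_div]
      have hprod : Tendsto
          (fun Q : ℕ => ∏ j ∈ Finset.range k, ((⌊γ * (Q:ℝ)⌋₊ - j : ℕ) : ℝ) / Q)
          atTop (nhds (γ ^ k)) := by
        have h := tendsto_finset_prod (Finset.range k) hfac
        simpa using h
      have key : ∀ Q : ℕ, ((⌊γ * Q⌋₊).choose k : ℝ) * (1 / Q) ^ k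
          = (∏ j ∈ Finset.range k, ((⌊γ * (Q:ℝ)⌋₊ - j : ℕ) : ℝ) / Q) / Nat.factorial k := by
        intro Q
        have hd : (((⌊γ * (Q:ℝ)⌋₊).descFactorial k : ℕ) : ℝ)
            = ∏ j ∈ Finset.range k, ((⌊γ * (Q:ℝ)⌋₊ - j : ℕ) : ℝ) := by
          rw [Nat.descFactorial_eq_prod_range, Nat.cast_prod]
        have hc : ((⌊γ * (Q:ℝ)⌋₊).choose k : ℝ)
            = (((⌊γ * (Q:ℝ)⌋₊).descFactorial k : ℕ) : ℝ) / Nat.factorial k := by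
          rw [Nat.descFactorial_eq_factorial_mul_choose]
          push_cast
          field_simp
        rw [hc, hd, Finset.prod_div_distrib, Finset.prod_const, Finset.card_range]
        ring
      have h := hprod.div_const (Nat.factorial k : ℝ)
      exact h.congr (fun Q => (key Q).symm)
    have hB : Tendsto (fun Q : ℕ => (1 - 1 / (Q : ℝ)) ^ (⌊γ * Q⌋₊ - k)) atTop
        (nhds (Real.exp (-γ))) := by
      have hE : Tendsto (fun Q : ℕ => ((⌊γ * (Q:ℝ)⌋₊ - k : ℕ) : ℝ) * Real.log (1 - 1 / Q))
          atTop (nhds (-γ)) := by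
        have h := hSlog.sub (hlog0.const_mul (k : ℝ))
        rw [mul_zero, sub_zero] at h
        refine h.congr' ?_
        filter_upwards [hSinf.eventually_ge_atTop k] with Q hS
        rw [Nat.cast_sub hS, sub_mul]
      have hexp := (Real.continuous_exp.tendsto _).comp hE
      refine Tendsto.congr' ?_ hexp
      filter_upwards [eventually_ge_atTop 2] with Q hQ
      have hQ2 : (2 : ℝ) ≤ Q := by exact_mod_cast hQ
      have hlt : (1 : ℝ) / Q ≤ 1 / 2 := by
        apply one_div_le_one_div_of_le <;> linarith
      have h0 : (0:ℝ) < 1 - 1 / Q := by linarith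
      show Real.exp (((⌊γ * (Q:ℝ)⌋₊ - k : ℕ) : ℝ) * Real.log (1 - 1 / Q))
          = (1 - 1 / (Q:ℝ)) ^ (⌊γ * (Q:ℝ)⌋₊ - k)
      rw [← Real.log_pow, Real.exp_log (pow_pos h0 _)]
    have h := (hA.mul hB).mul_const (Real.logb 2 (Nat.factorial k))
    simpa only [hf] using h
  -- dominating bound
  have hbound_summable : Summable (fun i : ℕ => (4 * γ) ^ i / (Nat.factorial i) / Real.log 2) :=
    (Real.summable_pow_div_factorial (4 * γ)).div_const _
  have hbound : ∀ᶠ Q : ℕ in atTop, ∀ k : ℕ,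
      ‖f Q k‖ ≤ (4 * γ) ^ k / (Nat.factorial k) / Real.log 2 := by
    filter_upwards [eventually_ge_atTop 1] with Q hQ k
    have hQ0 : (0 : ℝ) < Q := by exact_mod_cast hQ
    have hp0 : (0 : ℝ) ≤ 1 / Q := by positivity
    have hp1 : 1 / (Q : ℝ) ≤ 1 := by
      rw [div_le_one hQ0]; exact_mod_cast hQ
    have hone : (0:ℝ) ≤ 1 - 1 / (Q:ℝ) := by linarith
    have hfnn : 0 ≤ f Q k := by
      simp only [hf]
      apply mul_nonneg (mul_nonneg (mul_nonneg (Nat.cast_nonneg _) (by positivity)) _)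
        (logb_factorial_nonneg k)
      positivity
    rw [Real.norm_of_nonneg hfnn]
    simp only [hf]
    have hch : ((⌊γ * Q⌋₊).choose k : ℝ) * (1 / Q) ^ k ≤ γ ^ k / Nat.factorial k := by
      have h1 : ((⌊γ * Q⌋₊).choose k : ℝ) * (Nat.factorial k) ≤ (⌊γ * (Q:ℝ)⌋₊ : ℝ) ^ k := by
        have h := Nat.descFactorial_le_pow (⌊γ * (Q:ℝ)⌋₊) k
        rw [Nat.descFactorial_eq_factorial_mul_choose] at h
        exact_mod_cast
          (by linarith : ((⌊γ * Q⌋₊).choose k) * (Nat.factorial k) ≤ ⌊γ * (Q:ℝ)⌋₊ ^ k)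
      have h2 : (⌊γ * (Q:ℝ)⌋₊ : ℝ) * (1 / Q) ≤ γ := by
        rw [mul_one_div, div_le_iff₀ hQ0]
        exact Nat.floor_le (by positivity)
      have h3 : ((⌊γ * (Q:ℝ)⌋₊ : ℝ) * (1 / Q)) ^ k ≤ γ ^ k :=
        pow_le_pow_left₀ (by positivity) h2 k
      rw [mul_pow] at h3
      rw [le_div_iff₀ (by positivity : (0:ℝ) < (Nat.factorial k : ℝ))]
      calc ((⌊γ * Q⌋₊).choose k : ℝ) * (1 / Q) ^ k * (Nat.factorial k)
          = ((⌊γ * Q⌋₊).choose k : ℝ) * (Nat.factorial k) * (1 / Q) ^ k := by ring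
        _ ≤ (⌊γ * (Q:ℝ)⌋₊ : ℝ) ^ k * (1 / Q) ^ k :=
            mul_le_mul_of_nonneg_right h1 (by positivity)
        _ ≤ γ ^ k := h3
    have hpow1 : (1 - 1/(Q:ℝ)) ^ (⌊γ * Q⌋₊ - k) ≤ 1 :=
      pow_le_one₀ hone (by linarith)
    calc ((⌊γ * Q⌋₊).choose k : ℝ) * (1 / Q) ^ k * (1 - 1 / Q) ^ (⌊γ * Q⌋₊ - k) *
            Real.logb 2 (Nat.factorial k)
        ≤ ((⌊γ * Q⌋₊).choose k : ℝ) * (1 / Q) ^ k * 1 * Real.logb 2 (Nat.factorial k) := by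
          apply mul_le_mul_of_nonneg_right _ (logb_factorial_nonneg k)
          apply mul_le_mul_of_nonneg_left hpow1
          positivity
      _ = ((⌊γ * Q⌋₊).choose k : ℝ) * (1 / Q) ^ k * Real.logb 2 (Nat.factorial k) := by ring
      _ ≤ (γ ^ k / Nat.factorial k) * (4 ^ k / Real.log 2) :=
          mul_le_mul hch (logb_factorial_le k) (logb_factorial_nonneg k) (by positivity)
      _ = (4 * γ) ^ k / (Nat.factorial k) / Real.log 2 := by
          rw [mul_pow]; ring
  have h := tendsto_tsum_of_dominated_convergence hbound_summable hpt hbound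
  exact Tendsto.congr (fun Q => (hsum_eq Q).symm) h
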